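/- Let F, G be continuously differentiable with FG = I_r, let ρ solve ρ′ = F′Gρ, ρ(0) = I_r, let u₁ solve u₁′ = λGFu₁, u₁(0) = I_p. Define g(x,λ) = ρ(x)⁻¹ F(x) u₁(x,λ) G(0). Then g(0,λ) = I_r and g satisfies the integro-differential equation (d/dx) g(x,λ) − α(x) ∫₀ˣ β(t) g(t,λ) dt − λ g(x,λ) = 0, where α(x) = ρ(x)⁻¹ F′(x) ũ₁(x) and β(t) = −ũ₁(t)⁻¹ (G(t)F′(t)G(t) + G′(t)) ρ(t), with ũ₁′ = −GF′ũ₁, ũ₁(0) = I_p. -/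

import Mathlib

open Set Matrix intervalIntegral

attribute [local instance] Matrix.normedAddCommGroup Matrix.normedSpace

section helpers
variable {l m n : Type*} [Fintype l] [Fintype m] [Fintype n]
variable {s : Set ℝ} {x : ℝ}

theorem hasDerivWithinAt_matrix {A : ℝ → Matrix m n ℂ} {A' : Matrix m n ℂ} :
    HasDerivWithinAt A A' s x ↔ ∀ i j, HasDerivWithinAt (fun t => A t i j) (A' i j) s x :=
  ⟨fun h i j => hasDerivWithinAt_pi.1 (hasDerivWithinAt_pi.1 h i) j,
   fun h => hasDerivWithinAt_pi.2 fun i => hasDerivWithinAt_pi.2 fun j => h i j⟩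

theorem HasDerivWithinAt.matmul {A : ℝ → Matrix l m ℂ} {B : ℝ → Matrix m n ℂ}
    {A' : Matrix l m ℂ} {B' : Matrix m n ℂ}
    (hA : HasDerivWithinAt A A' s x) (hB : HasDerivWithinAt B B' s x) :
    HasDerivWithinAt (fun t => A t * B t) (A' * B x + A x * B') s x := by
  rw [hasDerivWithinAt_matrix] at hA hB ⊢
  intro i j
  simp only [Matrix.mul_apply, Matrix.add_apply]
  have := HasDerivWithinAt.fun_sum (u := Finset.univ)
    (fun k (_ : k ∈ Finset.univ) => (hA i k).mul (hB k j))
  simpa [Finset.sum_add_distrib] using this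

theorem continuousWithinAt_matrix {A : ℝ → Matrix m n ℂ} :
    ContinuousWithinAt A s x ↔ ∀ i j, ContinuousWithinAt (fun t => A t i j) s x := by
  constructor
  · intro h i j
    have h1 := tendsto_pi_nhds.1 h i
    exact tendsto_pi_nhds.1 h1 j
  · intro h
    exact tendsto_pi_nhds.2 fun i => tendsto_pi_nhds.2 fun j => h i j

theorem ContinuousWithinAt.matmul {A : ℝ → Matrix l m ℂ} {B : ℝ → Matrix m n ℂ}
    (hA : ContinuousWithinAt A s x) (hB : ContinuousWithinAt B s x) :
    ContinuousWithinAt (fun t => A t * B t) s x := by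
  rw [continuousWithinAt_matrix] at hA hB ⊢
  intro i j
  simp only [Matrix.mul_apply]
  exact tendsto_finset_sum _ fun k _ => (hA i k).mul (hB k j)

theorem ContinuousOn.matmul {A : ℝ → Matrix l m ℂ} {B : ℝ → Matrix m n ℂ} {s : Set ℝ}
    (hA : ContinuousOn A s) (hB : ContinuousOn B s) :
    ContinuousOn (fun t => A t * B t) s :=
  fun t ht => (hA t ht).matmul (hB t ht)

variable {ι : Type*} [Fintype ι] [DecidableEq ι]

theorem differentiableWithinAt_matdet {A : ℝ → Matrix ι ι ℂ}
    (h : ∀ i j, DifferentiableWithinAt ℝ (fun t => A t i j) s x) :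
    DifferentiableWithinAt ℝ (fun t => (A t).det) s x := by
  simp only [Matrix.det_apply']
  exact DifferentiableWithinAt.fun_sum fun σ _ =>
    ((DifferentiableWithinAt.fun_finset_prod fun i _ => h (σ i) i).const_mul _)

theorem differentiableWithinAt_matinv {A : ℝ → Matrix ι ι ℂ}
    (h : ∀ i j, DifferentiableWithinAt ℝ (fun t => A t i j) s x) (hx : IsUnit (A x)) :
    DifferentiableWithinAt ℝ (fun t => (A t)⁻¹) s x := by
  have hdet : (A x).det ≠ 0 :=
    IsUnit.ne_zero ((Matrix.isUnit_iff_isUnit_det _).1 hx)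
  apply differentiableWithinAt_pi.2
  intro i
  apply differentiableWithinAt_pi.2
  intro j
  have : ∀ t, (A t)⁻¹ i j = ((A t).det)⁻¹ * adjugate (A t) i j := by
    intro t
    rw [Matrix.inv_def, Ring.inverse_eq_inv']
    rfl
  simp only [this]
  apply DifferentiableWithinAt.mul
  · exact (differentiableWithinAt_matdet h).inv hdet
  · simp only [Matrix.adjugate_apply]
    apply differentiableWithinAt_matdet
    intro a b
    by_cases hab : a = j
    · subst hab
      simp only [Matrix.updateRow_self]
      exact differentiableWithinAt_const _
    · simp only [Matrix.updateRow_ne hab]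
      exact h a b

theorem HasDerivWithinAt.matinv {A : ℝ → Matrix ι ι ℂ} {A' : Matrix ι ι ℂ}
    (hA : HasDerivWithinAt A A' s x) (hu : ∀ t ∈ s, IsUnit (A t)) (hx : x ∈ s)
    (hs : UniqueDiffWithinAt ℝ s x) :
    HasDerivWithinAt (fun t => (A t)⁻¹) (-((A x)⁻¹ * A' * (A x)⁻¹)) s x := by
  have hdet : IsUnit (A x).det := (Matrix.isUnit_iff_isUnit_det _).1 (hu x hx)
  have hd : DifferentiableWithinAt ℝ (fun t => (A t)⁻¹) s x :=
    differentiableWithinAt_matinv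
      (fun i j => (hasDerivWithinAt_matrix.1 hA i j).differentiableWithinAt) (hu x hx)
  have hD := hd.hasDerivWithinAt
  set D := _root_.derivWithin (fun t => (A t)⁻¹) s x with hDdef
  have h1 : HasDerivWithinAt (fun t => A t * (A t)⁻¹) (A' * (A x)⁻¹ + A x * D) s x :=
    hA.matmul hD
  have hone : ∀ t ∈ s, A t * (A t)⁻¹ = 1 := fun t ht =>
    Matrix.mul_nonsing_inv _ ((Matrix.isUnit_iff_isUnit_det _).1 (hu t ht))
  have h0 : HasDerivWithinAt (fun t => A t * (A t)⁻¹) 0 s x :=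
    (hasDerivWithinAt_const x s 1).congr hone (hone x hx)
  have heq : A' * (A x)⁻¹ + A x * D = 0 := by
    rw [← h1.derivWithin hs, h0.derivWithin hs]
  have h2 : (A x)⁻¹ * (A' * (A x)⁻¹) + (A x)⁻¹ * (A x * D) = 0 := by
    rw [← mul_add, heq, mul_zero]
  rw [← mul_assoc, ← mul_assoc, Matrix.nonsing_inv_mul _ hdet, one_mul] at h2
  have : D = -((A x)⁻¹ * A' * (A x)⁻¹) := by
    rw [eq_neg_of_add_eq_zero_right h2]
  exact this ▸ hD

end helpers

theorem stmt_15 {r p : ℕ} (hr : 0 < r) (hp : 0 < p) {T : ℝ} (hT : 0 < T) (lam : ℂ)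
    (F F' : ℝ → Matrix (Fin r) (Fin p) ℂ) (G G' : ℝ → Matrix (Fin p) (Fin r) ℂ)
    (hFder : ∀ x ∈ Icc (0:ℝ) T, HasDerivWithinAt F (F' x) (Icc 0 T) x)
    (hGder : ∀ x ∈ Icc (0:ℝ) T, HasDerivWithinAt G (G' x) (Icc 0 T) x)
    (hFcont : ContinuousOn F' (Icc 0 T)) (hGcont : ContinuousOn G' (Icc 0 T))
    (hFG : ∀ x ∈ Icc (0:ℝ) T, F x * G x = 1)
    (ρ : ℝ → Matrix (Fin r) (Fin r) ℂ)
    (hρ : ∀ x ∈ Icc (0:ℝ) T,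
      HasDerivWithinAt ρ (F' x * G x * ρ x) (Icc 0 T) x)
    (hρ0 : ρ 0 = 1) (hρinv : ∀ x ∈ Icc (0:ℝ) T, IsUnit (ρ x))
    (u₁ tu : ℝ → Matrix (Fin p) (Fin p) ℂ)
    (hu₁ : ∀ x ∈ Icc (0:ℝ) T,
      HasDerivWithinAt u₁ (lam • (G x * F x * u₁ x)) (Icc 0 T) x)
    (hu₁0 : u₁ 0 = 1)
    (htu : ∀ x ∈ Icc (0:ℝ) T,
      HasDerivWithinAt tu (-(G x * F' x * tu x)) (Icc 0 T) x)
    (htu0 : tu 0 = 1) (htuinv : ∀ x ∈ Icc (0:ℝ) T, IsUnit (tu x))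
    (g : ℝ → Matrix (Fin r) (Fin r) ℂ)
    (hg : ∀ x : ℝ, g x = (ρ x)⁻¹ * (F x * u₁ x * G 0))
    (α : ℝ → Matrix (Fin r) (Fin p) ℂ)
    (hα : ∀ x : ℝ, α x = (ρ x)⁻¹ * (F' x * tu x))
    (β : ℝ → Matrix (Fin p) (Fin r) ℂ)
    (hβ : ∀ t : ℝ, β t = -((tu t)⁻¹ * ((G t * F' t * G t + G' t) * ρ t))) :
    g 0 = 1 ∧ ∀ x ∈ Icc (0:ℝ) T,
      HasDerivWithinAt g
        (α x * (∫ t in (0:ℝ)..x, β t * g t) + lam • g x) (Icc 0 T) x := by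
  have h0T : (0:ℝ) ∈ Icc (0:ℝ) T := ⟨le_rfl, hT.le⟩
  have hFG0 : F 0 * G 0 = 1 := hFG 0 h0T
  have hUD : UniqueDiffOn ℝ (Icc (0:ℝ) T) := uniqueDiffOn_Icc hT
  -- derivative of ρ⁻¹ and tu⁻¹
  have hσ : ∀ x ∈ Icc (0:ℝ) T, HasDerivWithinAt (fun t => (ρ t)⁻¹)
      (-((ρ x)⁻¹ * (F' x * G x * ρ x) * (ρ x)⁻¹)) (Icc 0 T) x :=
    fun x hx => (hρ x hx).matinv hρinv hx (hUD x hx)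
  have hτ : ∀ x ∈ Icc (0:ℝ) T, HasDerivWithinAt (fun t => (tu t)⁻¹)
      (-((tu x)⁻¹ * (-(G x * F' x * tu x)) * (tu x)⁻¹)) (Icc 0 T) x :=
    fun x hx => (htu x hx).matinv htuinv hx (hUD x hx)
  -- the primitive k
  set k : ℝ → Matrix (Fin p) (Fin r) ℂ :=
    fun t => (tu t)⁻¹ * ((1 - G t * F t) * u₁ t) * G 0 with hk
  -- pointwise cancellation facts
  have hdetρ : ∀ x ∈ Icc (0:ℝ) T, IsUnit (ρ x).det :=
    fun x hx => (Matrix.isUnit_iff_isUnit_det _).1 (hρinv x hx)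
  have hdettu : ∀ x ∈ Icc (0:ℝ) T, IsUnit (tu x).det :=
    fun x hx => (Matrix.isUnit_iff_isUnit_det _).1 (htuinv x hx)
  have hkd : ∀ x ∈ Icc (0:ℝ) T, HasDerivWithinAt k (β x * g x) (Icc 0 T) x := by
    intro x hx
    have d1 : HasDerivWithinAt (fun t => (1 : Matrix (Fin p) (Fin p) ℂ) - G t * F t)
        (0 - (G' x * F x + G x * F' x)) (Icc 0 T) x :=
      (hasDerivWithinAt_const x _ 1).sub ((hGder x hx).matmul (hFder x hx))
    have d2 := d1.matmul (hu₁ x hx)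
    have d3 := (hτ x hx).matmul d2
    have d4 := d3.matmul (hasDerivWithinAt_const x _ (G 0))
    convert d4 using 1
    have cσρ : ∀ {n' : Type} (X : Matrix (Fin r) n' ℂ), (ρ x)⁻¹ * (ρ x * X) = X :=
      fun X => by rw [← Matrix.mul_assoc, Matrix.nonsing_inv_mul _ (hdetρ x hx), Matrix.one_mul]
    have cρσ : ∀ {n' : Type} (X : Matrix (Fin r) n' ℂ), ρ x * ((ρ x)⁻¹ * X) = X :=
      fun X => by rw [← Matrix.mul_assoc, Matrix.mul_nonsing_inv _ (hdetρ x hx), Matrix.one_mul]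
    have cτtu : ∀ {n' : Type} (X : Matrix (Fin p) n' ℂ), (tu x)⁻¹ * (tu x * X) = X :=
      fun X => by rw [← Matrix.mul_assoc, Matrix.nonsing_inv_mul _ (hdettu x hx), Matrix.one_mul]
    have ctuτ : ∀ {n' : Type} (X : Matrix (Fin p) n' ℂ), tu x * ((tu x)⁻¹ * X) = X :=
      fun X => by rw [← Matrix.mul_assoc, Matrix.mul_nonsing_inv _ (hdettu x hx), Matrix.one_mul]
    have cFG : ∀ {n' : Type} (X : Matrix (Fin r) n' ℂ), F x * (G x * X) = X :=
      fun X => by rw [← Matrix.mul_assoc, hFG x hx, Matrix.one_mul]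
    rw [hβ, hg]
    simp only [Matrix.sub_mul, Matrix.mul_sub, Matrix.add_mul, Matrix.mul_add, Matrix.mul_assoc,
      Matrix.one_mul, Matrix.mul_one, Matrix.zero_mul, Matrix.mul_zero, Matrix.neg_mul,
      Matrix.mul_neg, neg_neg, Matrix.mul_smul, Matrix.smul_mul, cσρ, cρσ, cτtu, ctuτ, cFG,
      zero_sub, sub_zero, add_zero, zero_add, neg_sub, neg_add_rev, sub_self, smul_zero]
    abel
  -- continuity facts
  have hFc : ContinuousOn F (Icc 0 T) := fun t ht => (hFder t ht).continuousWithinAt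
  have hGc : ContinuousOn G (Icc 0 T) := fun t ht => (hGder t ht).continuousWithinAt
  have hρc : ContinuousOn ρ (Icc 0 T) := fun t ht => (hρ t ht).continuousWithinAt
  have hu₁c : ContinuousOn u₁ (Icc 0 T) := fun t ht => (hu₁ t ht).continuousWithinAt
  have hσc : ContinuousOn (fun t => (ρ t)⁻¹) (Icc 0 T) :=
    fun t ht => (hσ t ht).continuousWithinAt
  have hτc : ContinuousOn (fun t => (tu t)⁻¹) (Icc 0 T) :=
    fun t ht => (hτ t ht).continuousWithinAt
  have hgc : ContinuousOn g (Icc 0 T) := by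
    simp only [funext hg]
    exact hσc.matmul ((hFc.matmul hu₁c).matmul continuousOn_const)
  have hβc : ContinuousOn β (Icc 0 T) := by
    simp only [funext hβ]
    exact (hτc.matmul ((((hGc.matmul hFcont).matmul hGc).add hGcont).matmul hρc)).neg
  have hβgc : ContinuousOn (fun t => β t * g t) (Icc 0 T) := hβc.matmul hgc
  have hkcont : ContinuousOn k (Icc 0 T) := fun t ht => (hkd t ht).continuousWithinAt
  have hinv1r : (1 : Matrix (Fin r) (Fin r) ℂ)⁻¹ = 1 := Matrix.inv_eq_left_inv (by simp)
  have hinv1p : (1 : Matrix (Fin p) (Fin p) ℂ)⁻¹ = 1 := Matrix.inv_eq_left_inv (by simp)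
  constructor
  · rw [hg 0, hρ0, hu₁0, hinv1r, Matrix.one_mul, Matrix.mul_one, hFG0]
  intro x hx
  have hI : (∫ t in (0:ℝ)..x, β t * g t) = k x := by
    have h1 : (∫ t in (0:ℝ)..x, β t * g t) = k x - k 0 := by
      apply integral_eq_sub_of_hasDeriv_right_of_le hx.1
        (hkcont.mono (Icc_subset_Icc le_rfl hx.2))
      · intro t ht
        refine (hkd t ⟨ht.1.le, ht.2.le.trans hx.2⟩).mono_of_mem_nhdsWithin ?_
        refine Filter.mem_of_superset
          (Ioc_mem_nhdsGT_of_mem ⟨le_rfl, lt_of_lt_of_le ht.2 hx.2⟩) ?_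
        exact fun y hy => ⟨ht.1.le.trans hy.1.le, hy.2⟩
      · exact (hβgc.mono (by rw [uIcc_of_le hx.1]; exact Icc_subset_Icc le_rfl hx.2)).intervalIntegrable
    have hk0 : k 0 = 0 := by
      show (tu 0)⁻¹ * ((1 - G 0 * F 0) * u₁ 0) * G 0 = 0
      rw [htu0, hu₁0, hinv1p]
      simp [Matrix.sub_mul, Matrix.mul_assoc, hFG0]
    rw [h1, hk0, sub_zero]
  have hFu := (hFder x hx).matmul (hu₁ x hx)
  have hFuG := hFu.matmul (hasDerivWithinAt_const x _ (G 0))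
  have hder := (hσ x hx).matmul hFuG
  have hgder := hder.congr (fun t _ => hg t) (hg x)
  convert hgder using 1
  iterate 3 rfl
  rw [hI]
  have cσρ : ∀ {n' : Type} (X : Matrix (Fin r) n' ℂ), (ρ x)⁻¹ * (ρ x * X) = X :=
    fun X => by rw [← Matrix.mul_assoc, Matrix.nonsing_inv_mul _ (hdetρ x hx), Matrix.one_mul]
  have cρσ : ∀ {n' : Type} (X : Matrix (Fin r) n' ℂ), ρ x * ((ρ x)⁻¹ * X) = X :=
    fun X => by rw [← Matrix.mul_assoc, Matrix.mul_nonsing_inv _ (hdetρ x hx), Matrix.one_mul]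
  have cτtu : ∀ {n' : Type} (X : Matrix (Fin p) n' ℂ), (tu x)⁻¹ * (tu x * X) = X :=
    fun X => by rw [← Matrix.mul_assoc, Matrix.nonsing_inv_mul _ (hdettu x hx), Matrix.one_mul]
  have ctuτ : ∀ {n' : Type} (X : Matrix (Fin p) n' ℂ), tu x * ((tu x)⁻¹ * X) = X :=
    fun X => by rw [← Matrix.mul_assoc, Matrix.mul_nonsing_inv _ (hdettu x hx), Matrix.one_mul]
  have cFG : ∀ {n' : Type} (X : Matrix (Fin r) n' ℂ), F x * (G x * X) = X :=
    fun X => by rw [← Matrix.mul_assoc, hFG x hx, Matrix.one_mul]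
  rw [hα, hg x]
  simp only [hk]
  simp only [Matrix.sub_mul, Matrix.mul_sub, Matrix.add_mul, Matrix.mul_add, Matrix.mul_assoc,
    Matrix.one_mul, Matrix.mul_one, Matrix.zero_mul, Matrix.mul_zero, Matrix.neg_mul,
    Matrix.mul_neg, neg_neg, Matrix.mul_smul, Matrix.smul_mul, cσρ, cρσ, cτtu, ctuτ, cFG,
    zero_sub, sub_zero, add_zero, zero_add, neg_sub, neg_add_rev, sub_self, smul_zero]
  abel
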